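/- Orthogonal projection does not increase Gram–Schmidt norms: if π is the orthogonal projection onto a subspace W ⊆ R^N and b_1,…,b_N is a finite sequence of vectors, then for each i the i-th Gram–Schmidt vector of the projected family (π(b_1),…,π(b_N)) has norm at most that of b_i* (the i-th Gram–Schmidt vector of the original family), i.e., ‖(π(b))_i*‖ ≤ ‖b_i*‖. -/

import Mathlib

/-- Gram–Schmidt orthogonalization for families indexed by `Fin M`. -/
noncomputable def gramSchmidtFin {N M : ℕ} (b : Fin M → EuclideanSpace ℝ (Fin N)) :
    Fin M → EuclideanSpace ℝ (Fin N) :=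
  @InnerProductSpace.gramSchmidt ℝ _ _ _ _ (Fin M) _ _ ((Fin.Lt.isWellOrder M).toIsWellFounded) b

open Finset Submodule InnerProductSpace in
/-- The `i`-th Gram–Schmidt vector is orthogonal to the span of the earlier vectors. -/
lemma gramSchmidt_mem_orthogonal_span_Iio
    {E : Type*} [NormedAddCommGroup E] [InnerProductSpace ℝ E]
    {ι : Type*} [LinearOrder ι] [LocallyFiniteOrderBot ι] [WellFoundedLT ι]
    (f : ι → E) (i : ι) :
    gramSchmidt ℝ f i ∈ (span ℝ (f '' Set.Iio i))ᗮ := by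
  rw [← span_gramSchmidt_Iio ℝ f i, Submodule.mem_orthogonal]
  intro u hu
  induction hu using Submodule.span_induction with
  | mem x hx =>
    obtain ⟨k, hk, rfl⟩ := hx
    exact gramSchmidt_orthogonal ℝ f (ne_of_lt hk)
  | zero => simp
  | add x y _ _ hx hy => rw [inner_add_left, hx, hy, add_zero]
  | smul c x _ hx => rw [inner_smul_left, hx, mul_zero]

open Finset Submodule InnerProductSpace in
/-- Minimality: the `i`-th Gram–Schmidt vector has norm at most `‖f i - v‖` for any `v`
in the span of the earlier vectors. -/
lemma norm_gramSchmidt_le_norm_sub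
    {E : Type*} [NormedAddCommGroup E] [InnerProductSpace ℝ E]
    {ι : Type*} [LinearOrder ι] [LocallyFiniteOrderBot ι] [WellFoundedLT ι]
    (f : ι → E) (i : ι) {v : E} (hv : v ∈ span ℝ (f '' Set.Iio i)) :
    ‖gramSchmidt ℝ f i‖ ≤ ‖f i - v‖ := by
  set S := span ℝ (f '' Set.Iio i) with hS
  have hmem : f i - gramSchmidt ℝ f i ∈ S := by
    have : f i - gramSchmidt ℝ f i
        = ∑ j ∈ Iio i, (orthogonalProjection (ℝ ∙ gramSchmidt ℝ f j) (f i) : E) := by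
      rw [gramSchmidt_def ℝ f i]; abel
    rw [this]
    refine Submodule.sum_mem _ fun k hk => ?_
    have h1 : (ℝ ∙ gramSchmidt ℝ f k : Submodule ℝ E) ≤ S := by
      rw [hS, ← span_gramSchmidt_Iio ℝ f i]
      exact span_le.2 (by
        rintro x (rfl : x = gramSchmidt ℝ f k)
        exact subset_span ⟨k, Finset.mem_Iio.mp hk, rfl⟩)
    exact h1 (SetLike.coe_mem _)
  have horth : gramSchmidt ℝ f i ∈ Sᗮ := gramSchmidt_mem_orthogonal_span_Iio f i
  -- Pythagoras: ‖f i - v‖² = ‖gs‖² + ‖(f i - gs) - v‖²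
  have hsplit : f i - v = gramSchmidt ℝ f i + ((f i - gramSchmidt ℝ f i) - v) := by abel
  have hin : (inner ℝ (gramSchmidt ℝ f i) ((f i - gramSchmidt ℝ f i) - v) : ℝ) = 0 := by
    rw [real_inner_comm]
    exact (Submodule.mem_orthogonal _ _).1 horth _ (Submodule.sub_mem _ hmem hv)
  have hpyth := norm_add_sq_real (gramSchmidt ℝ f i) ((f i - gramSchmidt ℝ f i) - v)
  rw [hin] at hpyth
  have h2 : ‖gramSchmidt ℝ f i‖ ^ 2 ≤ ‖f i - v‖ ^ 2 := by
    rw [hsplit, hpyth]; nlinarith [sq_nonneg ‖(f i - gramSchmidt ℝ f i) - v‖]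
  exact (pow_le_pow_iff_left₀ (norm_nonneg _) (norm_nonneg _) two_ne_zero).mp h2

open Submodule InnerProductSpace in
/-- Orthogonal projection does not increase Gram–Schmidt norms: the `i`-th Gram–Schmidt
vector of the projected family `(π(b 1), …, π(b M))` has norm at most `‖b i*‖`. -/
theorem gramSchmidt_norm_le_of_orthogonalProjection (N M : ℕ)
    (W : Submodule ℝ (EuclideanSpace ℝ (Fin N)))
    (b : Fin M → EuclideanSpace ℝ (Fin N)) :
    ∀ i : Fin M,
      ‖gramSchmidtFin (fun j => (Submodule.orthogonalProjectionOnto W (b j) : EuclideanSpace ℝ (Fin N))) i‖ ≤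
        ‖gramSchmidtFin b i‖ := by
  intro i
  letI : WellFoundedLT (Fin M) := (Fin.Lt.isWellOrder M).toIsWellFounded
  set P : EuclideanSpace ℝ (Fin N) →L[ℝ] EuclideanSpace ℝ (Fin N) :=
    W.subtypeL.comp (orthogonalProjection W) with hP
  have hPnorm : ∀ x : EuclideanSpace ℝ (Fin N), ‖P x‖ ≤ ‖x‖ := by
    intro x
    calc ‖P x‖ = ‖orthogonalProjection W x‖ := rfl
    _ ≤ ‖x‖ := by
      have := orthogonalProjection_norm_le W
      calc ‖orthogonalProjection W x‖
          ≤ ‖(orthogonalProjection W : EuclideanSpace ℝ (Fin N) →L[ℝ] W)‖ * ‖x‖ :=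
            (orthogonalProjection W).le_opNorm x
        _ ≤ 1 * ‖x‖ := by gcongr
        _ = ‖x‖ := one_mul _
  unfold gramSchmidtFin
  -- the key vector: the orthogonal part of `b i` w.r.t. span of earlier `b`'s
  set g := gramSchmidt ℝ b i with hg
  set w := b i - g with hw
  have hwmem : w ∈ span ℝ (b '' Set.Iio i) := by
    have hmem : b i - gramSchmidt ℝ b i ∈ span ℝ (b '' Set.Iio i) := by
      have hdef : b i - gramSchmidt ℝ b i
          = ∑ j ∈ Finset.Iio i,
            (orthogonalProjection (ℝ ∙ gramSchmidt ℝ b j) (b i) : EuclideanSpace ℝ (Fin N)) := by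
        rw [gramSchmidt_def ℝ b i]; abel
      rw [hdef]
      refine Submodule.sum_mem _ fun k hk => ?_
      have h1 : (ℝ ∙ gramSchmidt ℝ b k : Submodule ℝ (EuclideanSpace ℝ (Fin N)))
          ≤ span ℝ (b '' Set.Iio i) := by
        rw [← span_gramSchmidt_Iio ℝ b i]
        exact span_le.2 (by
          rintro x (rfl : x = gramSchmidt ℝ b k)
          exact subset_span ⟨k, Finset.mem_Iio.mp hk, rfl⟩)
      exact h1 (SetLike.coe_mem _)
    exact hmem
  -- P w lies in the span of the projected earlier vectors
  have hPw : P w ∈ span ℝ ((fun j => P (b j)) '' Set.Iio i) := by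
    have himg : (fun j => P (b j)) '' Set.Iio i = P '' (b '' Set.Iio i) := by
      rw [Set.image_image]
    rw [himg]
    exact Submodule.apply_mem_span_image_of_mem_span
      (f := (P : EuclideanSpace ℝ (Fin N) →ₗ[ℝ] EuclideanSpace ℝ (Fin N))) hwmem
  calc ‖gramSchmidt ℝ (fun j => (orthogonalProjection W (b j) : EuclideanSpace ℝ (Fin N))) i‖
      = ‖gramSchmidt ℝ (fun j => P (b j)) i‖ := rfl
    _ ≤ ‖P (b i) - P w‖ := norm_gramSchmidt_le_norm_sub _ i hPw
    _ = ‖P (b i - w)‖ := by rw [hw, hg]; congr 1; simp only [map_sub]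
    _ ≤ ‖b i - w‖ := hPnorm _
    _ = ‖g‖ := by rw [hw]; congr 1; abel
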